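/- Gaussian mechanism under zCDP: let f be a function with ℓ₂-sensitivity Δ₂ (i.e., ||f(D) − f(D')||₂ ≤ Δ₂ for adjacent D, D'). For any ρ > 0, the mechanism A(D) = f(D) + N(0, σ²I_d) with σ² = Δ₂²/(2ρ) satisfies ρ-zCDP. -/

import Mathlib

open MeasureTheory ProbabilityTheory Real
open scoped ENNReal NNReal

lemma lintegral_pi_prod {n : ℕ} {X : Type*} [MeasurableSpace X] (μ : Fin n → Measure X)
    [∀ i, SigmaFinite (μ i)] (h : Fin n → X → ℝ≥0∞) (hm : ∀ i, Measurable (h i)) :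
    ∫⁻ x, ∏ i, h i (x i) ∂Measure.pi μ = ∏ i, ∫⁻ t, h i t ∂μ i := by
  induction n with
  | zero => simp [Measure.pi_of_empty]
  | succ n ih =>
    have key := (measurePreserving_piFinSuccAbove μ 0).lintegral_comp_emb
      (MeasurableEquiv.piFinSuccAbove (fun _ : Fin (n+1) => X) 0).measurableEmbedding
      (f := fun p : X × (Fin n → X) => h 0 p.1 * ∏ i, h i.succ (p.2 i))
    have heq : ∀ x : Fin (n+1) → X,
        (fun p : X × (Fin n → X) => h 0 p.1 * ∏ i, h i.succ (p.2 i))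
          ((MeasurableEquiv.piFinSuccAbove (fun _ : Fin (n+1) => X) 0) x)
        = ∏ i, h i (x i) := by
      intro x
      simp [MeasurableEquiv.piFinSuccAbove, Fin.prod_univ_succ, Fin.succAbove, Fin.tail]
    rw [funext heq] at key
    have h2 := lintegral_prod_mul (μ := μ 0)
      (ν := Measure.pi fun j : Fin n => μ ((0 : Fin (n+1)).succAbove j))
      (hm 0).aemeasurable
      (g := fun y : Fin n → X => ∏ i, h i.succ (y i))
      ((Finset.measurable_prod Finset.univ fun i _ =>
        (hm i.succ).comp (measurable_pi_apply i)).aemeasurable)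
    rw [key, h2]
    simp only [Fin.zero_succAbove] at *
    rw [ih _ _ fun i => hm i.succ, Fin.prod_univ_succ]

lemma pi_withDensity {n : ℕ} {X : Type*} [MeasurableSpace X] (ν : Fin n → Measure X)
    [∀ i, SigmaFinite (ν i)] (g : Fin n → X → ℝ≥0∞) (hg : ∀ i, Measurable (g i))
    [∀ i, SigmaFinite ((ν i).withDensity (g i))] :
    Measure.pi (fun i => (ν i).withDensity (g i))
      = (Measure.pi ν).withDensity (fun x => ∏ i, g i (x i)) := by
  have main : ∀ s : Fin n → Set X, (∀ i, MeasurableSet (s i)) →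
      ((Measure.pi ν).withDensity fun x => ∏ i, g i (x i)) (Set.pi Set.univ s)
        = ∏ i, ((ν i).withDensity (g i)) (s i) := by
    intro s hs
    rw [withDensity_apply _ (MeasurableSet.univ_pi hs)]
    rw [← lintegral_indicator (μ := Measure.pi ν) (MeasurableSet.univ_pi hs)
      (f := fun y => ∏ i, g i (y i))]
    have hind : ∀ x : Fin n → X, (Set.pi Set.univ s).indicator (fun y => ∏ i, g i (y i)) x
      = ∏ i, (s i).indicator (g i) (x i) := by
      intro x
      by_cases hx : x ∈ Set.pi Set.univ s
      · rw [Set.indicator_of_mem hx]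
        exact Finset.prod_congr rfl fun i _ =>
          (Set.indicator_of_mem (hx i (Set.mem_univ i)) _).symm
      · rw [Set.indicator_of_notMem hx]
        rw [Set.mem_univ_pi] at hx
        push_neg at hx
        obtain ⟨i, hi⟩ := hx
        exact (Finset.prod_eq_zero (Finset.mem_univ i) (Set.indicator_of_notMem hi _)).symm
    simp_rw [hind]
    rw [lintegral_pi_prod _ _ (fun i => ((hg i).indicator (hs i)))]
    exact Finset.prod_congr rfl fun i _ => by
      rw [lintegral_indicator (hs i), withDensity_apply _ (hs i)]
  exact Measure.pi_eq main

lemma gauss_ratio_mul (μ μ' : ℝ) {v : ℝ≥0} (hv : v ≠ 0) (α t : ℝ) :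
    (gaussianPDFReal μ v t / gaussianPDFReal μ' v t) ^ α * gaussianPDFReal μ' v t
      = Real.exp (α * (α - 1) * (μ - μ') ^ 2 / (2 * v)) *
        gaussianPDFReal (α * μ + (1 - α) * μ') v t := by
  have hvpos : (0:ℝ) < v := lt_of_le_of_ne v.coe_nonneg (by exact_mod_cast (Ne.symm hv))
  have hc : (√(2 * π * v))⁻¹ ≠ 0 := by positivity
  unfold gaussianPDFReal
  rw [mul_div_mul_left _ _ hc, ← Real.exp_sub, ← Real.exp_mul,
      mul_left_comm, mul_left_comm (Real.exp _), ← Real.exp_add, ← Real.exp_add]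
  congr 2
  have h2v : (2 * (v:ℝ)) ≠ 0 := by positivity
  field_simp
  ring

lemma integral_gauss_ratio (μ μ' : ℝ) {v : ℝ≥0} (hv : v ≠ 0) (α : ℝ) :
    ∫ t, (gaussianPDFReal μ v t / gaussianPDFReal μ' v t) ^ α * gaussianPDFReal μ' v t
      = Real.exp (α * (α - 1) * (μ - μ') ^ 2 / (2 * v)) := by
  simp_rw [gauss_ratio_mul μ μ' hv α]
  rw [integral_const_mul, integral_gaussianPDFReal_eq_one _ hv, mul_one]

/-- Rényi divergence of order `α` between two measures, via the Radon–Nikodym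
derivative: `(α-1)⁻¹ log ∫ (dP/dQ)^α dQ`. -/
noncomputable def renyiDivM {Ω : Type*} [MeasurableSpace Ω] (α : ℝ)
    (P Q : Measure Ω) : ℝ :=
  (α - 1)⁻¹ * Real.log (∫ x, (P.rnDeriv Q x).toReal ^ α ∂Q)

/-- `ρ`-zCDP for a measure-valued mechanism. -/
def zCDPm {D Ω : Type*} [MeasurableSpace Ω] (Adj : D → D → Prop)
    (M : D → Measure Ω) (ρ : ℝ) : Prop :=
  ∀ d d', Adj d d' → ∀ α : ℝ, 1 < α → renyiDivM α (M d) (M d') ≤ ρ * α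

/-- Gaussian mechanism: if `f` has ℓ₂-sensitivity `Δ₂` over adjacent datasets, then
adding independent `N(0, σ²)` noise with `σ² = Δ₂²/(2ρ)` to every coordinate of `f`
satisfies `ρ`-zCDP. -/
theorem gaussian_mechanism_zCDP {D : Type*} {n : ℕ} (Adj : D → D → Prop)
    (f : D → EuclideanSpace ℝ (Fin n)) (Δ₂ ρ : ℝ) (hΔ : 0 < Δ₂) (hρ : 0 < ρ)
    (hsens : ∀ d d', Adj d d' → ‖f d - f d'‖ ≤ Δ₂)
    (v : ℝ≥0) (hv : (v : ℝ) = Δ₂ ^ 2 / (2 * ρ)) :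
    zCDPm Adj (fun d => Measure.pi (fun i : Fin n => gaussianReal (f d i) v)) ρ := by
  intro d d' hadj α hα
  have hvpos : (0:ℝ) < v := by rw [hv]; positivity
  have hv0 : v ≠ 0 := by
    intro h; rw [h] at hvpos; simp at hvpos
  set μ : Fin n → ℝ := fun i => f d i with hμdef
  set μ' : Fin n → ℝ := fun i => f d' i with hμ'def
  set P : Measure (Fin n → ℝ) := Measure.pi fun i => gaussianReal (μ i) v with hPdef
  set Q : Measure (Fin n → ℝ) := Measure.pi fun i => gaussianReal (μ' i) v with hQdef
  set r : Fin n → ℝ → ℝ := fun i t => gaussianPDFReal (μ i) v t / gaussianPDFReal (μ' i) v t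
    with hrdef
  have hrmeas : ∀ i, Measurable (r i) := fun i =>
    (measurable_gaussianPDFReal _ _).div (measurable_gaussianPDFReal _ _)
  have hrpos : ∀ i t, 0 < r i t := fun i t =>
    div_pos (gaussianPDFReal_pos _ _ _ hv0) (gaussianPDFReal_pos _ _ _ hv0)
  set g : (Fin n → ℝ) → ℝ≥0∞ := fun x => ∏ i, ENNReal.ofReal (r i (x i)) with hgdef
  have hgmeas : Measurable g := Finset.measurable_prod _ fun i _ =>
    ((hrmeas i).comp (measurable_pi_apply i)).ennreal_ofReal
  haveI hsf : ∀ (m : Fin n → ℝ) (i : Fin n),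
      SigmaFinite ((volume : Measure ℝ).withDensity (gaussianPDF (m i) v)) := fun m i => by
    rw [← gaussianReal_of_var_ne_zero _ hv0]; infer_instance
  -- express `P` and `Q` as densities over Lebesgue measure
  have hQd : Q = (Measure.pi fun _ : Fin n => (volume : Measure ℝ)).withDensity
      (fun x => ∏ i, gaussianPDF (μ' i) v (x i)) := by
    rw [hQdef]
    conv_lhs => rw [show (fun i : Fin n => gaussianReal (μ' i) v)
      = fun i : Fin n => (volume : Measure ℝ).withDensity (gaussianPDF (μ' i) v) from
      funext fun i => gaussianReal_of_var_ne_zero _ hv0]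
    exact pi_withDensity _ _ fun i => measurable_gaussianPDF _ _
  have hPQ : P = Q.withDensity g := by
    have hPd : P = (Measure.pi fun _ : Fin n => (volume : Measure ℝ)).withDensity
        (fun x => ∏ i, gaussianPDF (μ i) v (x i)) := by
      rw [hPdef]
      conv_lhs => rw [show (fun i : Fin n => gaussianReal (μ i) v)
        = fun i : Fin n => (volume : Measure ℝ).withDensity (gaussianPDF (μ i) v) from
        funext fun i => gaussianReal_of_var_ne_zero _ hv0]
      exact pi_withDensity _ _ fun i => measurable_gaussianPDF _ _
    have hmQ : Measurable (fun x : Fin n → ℝ => ∏ i, gaussianPDF (μ' i) v (x i)) :=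
      Finset.measurable_prod _ fun i _ =>
        (measurable_gaussianPDF _ _).comp (measurable_pi_apply i)
    rw [hQd, ← withDensity_mul _ hmQ hgmeas, hPd]
    congr 1
    funext x
    rw [Pi.mul_apply, hgdef, ← Finset.prod_mul_distrib]
    refine Finset.prod_congr rfl fun i _ => ?_
    rw [gaussianPDF, gaussianPDF, hrdef,
      ← ENNReal.ofReal_mul (gaussianPDFReal_nonneg _ _ _)]
    congr 1
    show gaussianPDFReal (μ i) v (x i)
      = gaussianPDFReal (μ' i) v (x i)
        * (gaussianPDFReal (μ i) v (x i) / gaussianPDFReal (μ' i) v (x i))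
    exact (mul_div_cancel₀ _ (gaussianPDFReal_pos (μ' i) v (x i) hv0).ne').symm
  -- Radon–Nikodym derivative
  have hrn : P.rnDeriv Q =ᵐ[Q] g := by
    rw [hPQ]; exact Measure.rnDeriv_withDensity Q hgmeas
  -- compute the integral
  have hint : ∫ x, (P.rnDeriv Q x).toReal ^ α ∂Q
      = ∏ i, Real.exp (α * (α - 1) * (μ i - μ' i) ^ 2 / (2 * v)) := by
    have h1 : ∫ x, (P.rnDeriv Q x).toReal ^ α ∂Q = ∫ x, ∏ i, r i (x i) ^ α ∂Q := by
      refine integral_congr_ae (hrn.mono fun x hx => ?_)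
      show ((P.rnDeriv Q) x).toReal ^ α = ∏ i, r i (x i) ^ α
      rw [hx, hgdef, ENNReal.toReal_prod,
        ← Real.finset_prod_rpow _ _ (fun i _ => ENNReal.toReal_nonneg) α]
      exact Finset.prod_congr rfl fun i _ => by
        rw [ENNReal.toReal_ofReal (hrpos i (x i)).le]
    rw [h1, hQd]
    have hF : (fun x : Fin n → ℝ => ∏ i, gaussianPDF (μ' i) v (x i))
        = fun x : Fin n → ℝ =>
          (((∏ i, gaussianPDFReal (μ' i) v (x i)).toNNReal : ℝ≥0) : ℝ≥0∞) := by
      funext x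
      rw [show ((((∏ i, gaussianPDFReal (μ' i) v (x i)).toNNReal : ℝ≥0)) : ℝ≥0∞)
        = ENNReal.ofReal (∏ i, gaussianPDFReal (μ' i) v (x i)) from rfl,
        ENNReal.ofReal_prod_of_nonneg fun i _ => gaussianPDFReal_nonneg _ _ _]
      rfl
    have hFmeas : Measurable (fun x : Fin n → ℝ =>
        (∏ i, gaussianPDFReal (μ' i) v (x i)).toNNReal) :=
      (Finset.measurable_prod Finset.univ fun i _ =>
        (measurable_gaussianPDFReal (μ' i) v).comp (measurable_pi_apply i)).real_toNNReal
    rw [hF, integral_withDensity_eq_integral_smul hFmeas]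
    have h2 : ∀ x : Fin n → ℝ,
        (∏ i, gaussianPDFReal (μ' i) v (x i)).toNNReal • (∏ i, r i (x i) ^ α)
          = ∏ i, (r i (x i) ^ α * gaussianPDFReal (μ' i) v (x i)) := by
      intro x
      rw [NNReal.smul_def, smul_eq_mul, Real.coe_toNNReal _
        (Finset.prod_nonneg fun i _ => gaussianPDFReal_nonneg _ _ _),
        ← Finset.prod_mul_distrib]
      exact Finset.prod_congr rfl fun i _ => mul_comm _ _
    simp_rw [h2]
    rw [show (Measure.pi fun _ : Fin n => (volume : Measure ℝ))
      = (volume : Measure (Fin n → ℝ)) from (volume_pi).symm]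
    rw [MeasureTheory.integral_fintype_prod_volume_eq_prod (f := fun i t =>
      r i t ^ α * gaussianPDFReal (μ' i) v t)]
    exact Finset.prod_congr rfl fun i _ => integral_gauss_ratio (μ i) (μ' i) hv0 α
  -- conclude
  rw [renyiDivM]
  show (α - 1)⁻¹ * Real.log (∫ x, (P.rnDeriv Q x).toReal ^ α ∂Q) ≤ ρ * α
  rw [hint, ← Real.exp_sum, Real.log_exp]
  have hα1 : α - 1 ≠ 0 := by linarith
  have hsum : ∑ i, α * (α - 1) * (μ i - μ' i) ^ 2 / (2 * (v:ℝ))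
      = α * (α - 1) * (∑ i, (μ i - μ' i) ^ 2) / (2 * (v:ℝ)) := by
    rw [← Finset.sum_div, ← Finset.mul_sum]
  have hnorm : ∑ i, (μ i - μ' i) ^ 2 = ‖f d - f d'‖ ^ 2 := by
    rw [EuclideanSpace.norm_eq, Real.sq_sqrt (by positivity)]
    refine Finset.sum_congr rfl fun i _ => ?_
    rw [Real.norm_eq_abs, sq_abs]
    congr 1 <;> simp [hμdef, hμ'def]
  have hS : ∑ i, (μ i - μ' i) ^ 2 ≤ Δ₂ ^ 2 := by
    rw [hnorm]
    exact pow_le_pow_left₀ (norm_nonneg _) (hsens d d' hadj) 2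
  have hSnn : 0 ≤ ∑ i, (μ i - μ' i) ^ 2 := Finset.sum_nonneg fun i _ => sq_nonneg _
  rw [hsum, show α * (α - 1) * (∑ i, (μ i - μ' i) ^ 2) / (2 * (v:ℝ))
    = (α - 1) * (α * (∑ i, (μ i - μ' i) ^ 2) / (2 * (v:ℝ))) from by ring,
    inv_mul_cancel_left₀ hα1]
  have hfinal : α * (∑ i, (μ i - μ' i) ^ 2) / (2 * (v:ℝ)) ≤ α * Δ₂ ^ 2 / (2 * (v:ℝ)) := by
    gcongr <;> linarith
  calc α * (∑ i, (μ i - μ' i) ^ 2) / (2 * (v:ℝ)) ≤ α * Δ₂ ^ 2 / (2 * (v:ℝ)) := hfinal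
    _ = ρ * α := by rw [hv]; field_simp
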